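/- (Extension of the inverse of the small divisor ω·ℓ.) Let ν ≥ 1, τ > 0, k ∈ ℕ and γ ∈ (0,1]. Let χ : ℝ → [0,1] be a cut-off function (C^∞, even, χ(y) = 0 for |y| ≤ 1/3, χ(y) = 1 for |y| ≥ 2/3). For ℓ ∈ ℤ^ν with ℓ ≠ 0 define g_ℓ : ℝ^ν → ℝ by g_ℓ(ω) := χ( (ω·ℓ)·⟨ℓ⟩^τ·γ^{−1} ) / (ω·ℓ) if ω·ℓ ≠ 0, and g_ℓ(ω) := 0 if ω·ℓ = 0. Then g_ℓ is C^∞ on ℝ^ν, g_ℓ(ω) = 1/(ω·ℓ) for every ω with |ω·ℓ| ≥ γ⟨ℓ⟩^{−τ}, and there exists a constant C > 0, depending only on k, ν and χ, such that for all ω ∈ ℝ^ν and all multi-indices α with |α| ≤ k+1: γ^{|α|}·|∂_ω^α g_ℓ(ω)| ≤ C·γ^{−1}·⟨ℓ⟩^{μ}, where μ := k + 1 + (k+2)τ. -/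

import Mathlib

/-- A cut-off function: C^∞, even, valued in [0,1], vanishing for |y| ≤ 1/3 and
equal to 1 for |y| ≥ 2/3. -/
def IsCutoff (χ : ℝ → ℝ) : Prop :=
  (∀ m : ℕ, ContDiff ℝ m χ) ∧ (∀ y : ℝ, χ (-y) = χ y) ∧
  (∀ y : ℝ, χ y ∈ Set.Icc (0 : ℝ) 1) ∧
  (∀ y : ℝ, |y| ≤ 1 / 3 → χ y = 0) ∧ (∀ y : ℝ, 2 / 3 ≤ |y| → χ y = 1)

/-- ⟨ℓ⟩ := max{1, max_i |ℓ_i|} for an integer vector ℓ ∈ ℤ^ν. -/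
noncomputable def brakF {ν : ℕ} (ℓ : Fin ν → ℤ) : ℝ :=
  ((max 1 (Finset.univ.sup fun i => (ℓ i).natAbs) : ℕ) : ℝ)

/-- Partial derivative in the i-th coordinate direction of a function on ℝ^ν. -/
noncomputable def pderiv' {ν : ℕ} (i : Fin ν) (f : (Fin ν → ℝ) → ℝ) : (Fin ν → ℝ) → ℝ :=
  fun x => fderiv ℝ f x (Pi.single i 1)

/-- Multi-index partial derivative ∂^α on ℝ^ν. -/
noncomputable def multiDeriv {ν : ℕ} (α : Fin ν → ℕ) (f : (Fin ν → ℝ) → ℝ) :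
    (Fin ν → ℝ) → ℝ :=
  (List.finRange ν).foldr (fun i g => (pderiv' i)^[α i] g) f

/-- The regularized inverse of the small divisor ω·ℓ:
g_ℓ(ω) = χ((ω·ℓ)⟨ℓ⟩^τ γ⁻¹)/(ω·ℓ), with g_ℓ(ω) = 0 when ω·ℓ = 0. -/
noncomputable def gsd {ν : ℕ} (χ : ℝ → ℝ) (τ γ : ℝ) (ℓ : Fin ν → ℤ) (ω : Fin ν → ℝ) : ℝ :=
  if (∑ i, ω i * (ℓ i : ℝ)) = 0 then 0
  else χ ((∑ i, ω i * (ℓ i : ℝ)) * brakF ℓ ^ τ * γ⁻¹) / (∑ i, ω i * (ℓ i : ℝ))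

namespace SDIE

/-- The regularized reciprocal: ψ(s) = χ(s)/s, extended by 0 at 0. -/
noncomputable def psi (χ : ℝ → ℝ) : ℝ → ℝ := fun s => if s = 0 then 0 else χ s / s

lemma natle_infty (n : ℕ) : (n : WithTop ℕ∞) ≤ (⊤ : ℕ∞) := by
  exact_mod_cast (le_top : (n : ℕ∞) ≤ ⊤)

lemma denom_pos {χ : ℝ → ℝ} (hχ : IsCutoff χ) (s : ℝ) :
    0 < s ^ 2 + (1 - χ (2 * s)) := by
  obtain ⟨-, -, h01, h0, -⟩ := hχ
  rcases eq_or_ne s 0 with rfl | hs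
  · have : χ (2 * 0) = 0 := by
      rw [mul_zero]; exact h0 0 (by norm_num)
    rw [this]; norm_num
  · have h2 : 0 < s ^ 2 := by positivity
    have := (h01 (2 * s)).2
    linarith

lemma psi_formula {χ : ℝ → ℝ} (hχ : IsCutoff χ) :
    psi χ = fun s => χ s * (s / (s ^ 2 + (1 - χ (2 * s)))) := by
  funext s
  obtain ⟨-, -, -, h0, h1⟩ := hχ
  unfold psi
  rcases eq_or_ne s 0 with rfl | hs
  · simp
  · rw [if_neg hs]
    rcases le_or_gt |s| (1 / 3) with hle | hgt
    · rw [h0 s hle]; simp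
    · have h2s : χ (2 * s) = 1 := by
        refine h1 _ ?_
        rw [abs_mul, abs_two]; linarith
      rw [h2s]
      have hden : s ^ 2 + (1 - 1) = s * s := by ring
      rw [hden]
      field_simp

lemma psi_smooth {χ : ℝ → ℝ} (hχ : IsCutoff χ) : ContDiff ℝ (⊤ : ℕ∞) (psi χ) := by
  have hsm := hχ.1
  have hcs : ContDiff ℝ (⊤ : ℕ∞) χ := contDiff_infty.2 hsm
  rw [psi_formula hχ]
  refine hcs.mul (ContDiff.div contDiff_id
    ((contDiff_id.pow 2).add
      (contDiff_const.sub (hcs.comp (contDiff_const.mul contDiff_id))))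
    (fun s => (denom_pos hχ s).ne'))

lemma psi_eq_inv {χ : ℝ → ℝ} (hχ : IsCutoff χ) {s : ℝ} (hs : 2 / 3 ≤ |s|) :
    psi χ s = s⁻¹ := by
  have hs0 : s ≠ 0 := by
    intro h; rw [h] at hs; simp at hs; linarith
  unfold psi
  rw [if_neg hs0, hχ.2.2.2.2 s hs, one_div]

lemma psi_bound_n {χ : ℝ → ℝ} (hχ : IsCutoff χ) (n : ℕ) :
    ∃ B : ℝ, 0 < B ∧ ∀ s : ℝ, |iteratedDeriv n (psi χ) s| ≤ B := by
  have hcont : Continuous (iteratedDeriv n (psi χ)) :=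
    (psi_smooth hχ).continuous_iteratedDeriv n (natle_infty n)
  obtain ⟨B1, hB1⟩ :=
    (isCompact_Icc (a := (-1 : ℝ)) (b := 1)).exists_bound_of_continuousOn
      hcont.continuousOn
  set P := |∏ i ∈ Finset.range n, (-1 - (i : ℝ))| with hP
  refine ⟨max B1 P + 1, by positivity, fun s => ?_⟩
  rcases le_or_gt |s| 1 with hs | hs
  · rw [abs_le] at hs
    have := hB1 s (Set.mem_Icc.2 ⟨hs.1, hs.2⟩)
    rw [Real.norm_eq_abs] at this
    have := le_max_left B1 P
    linarith
  · have hev : psi χ =ᶠ[nhds s] Inv.inv := by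
      have hopen : IsOpen {y : ℝ | 2 / 3 < |y|} := isOpen_Ioi.preimage continuous_abs
      filter_upwards [hopen.mem_nhds (show s ∈ {y : ℝ | 2 / 3 < |y|} by
        simp only [Set.mem_setOf_eq]; linarith)] with y hy
      exact psi_eq_inv hχ (le_of_lt hy)
    rw [hev.iteratedDeriv_eq n, iteratedDeriv_eq_iterate, iter_deriv_inv, abs_mul]
    have h1 : |s ^ (-1 - (n : ℤ))| ≤ 1 := by
      rw [show (-1 - (n : ℤ)) = -((n + 1 : ℕ) : ℤ) by push_cast; ring,
        zpow_neg, zpow_natCast, abs_inv, abs_pow]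
      exact inv_le_one_of_one_le₀ (one_le_pow₀ hs.le)
    have h2 : |∏ i ∈ Finset.range n, (-1 - (i : ℝ))| * |s ^ (-1 - (n : ℤ))| ≤ P * 1 :=
      mul_le_mul_of_nonneg_left h1 (abs_nonneg _)
    have := le_max_right B1 P
    have h3 : ∀ m : ℕ, ((-1 : ℝ)) ^ m * (m.factorial : ℝ) = ∏ i ∈ Finset.range m, (-1 - (i : ℝ)) := by
      intro m
      induction m with
      | zero => simp
      | succ m ih => rw [Finset.prod_range_succ, ← ih, Nat.factorial_succ, pow_succ]; push_cast; ring
    rw [h3 n]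
    linarith

lemma psi_bound {χ : ℝ → ℝ} (hχ : IsCutoff χ) (K : ℕ) :
    ∃ B : ℝ, 0 < B ∧ ∀ n ≤ K, ∀ s : ℝ, |iteratedDeriv n (psi χ) s| ≤ B := by
  induction K with
  | zero =>
    obtain ⟨B, hB, h⟩ := psi_bound_n hχ 0
    exact ⟨B, hB, fun n hn s => by rw [Nat.le_zero.1 hn]; exact h s⟩
  | succ K IH =>
    obtain ⟨B1, hB1, h1⟩ := IH
    obtain ⟨B2, hB2, h2⟩ := psi_bound_n hχ (K + 1)
    refine ⟨max B1 B2, lt_max_of_lt_left hB1, fun n hn s => ?_⟩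
    rcases eq_or_lt_of_le hn with rfl | hn'
    · exact (h2 s).trans (le_max_right _ _)
    · exact (h1 n (Nat.lt_succ_iff.1 hn') s).trans (le_max_left _ _)

lemma iteratedDeriv_iteratedDeriv (f : ℝ → ℝ) (n m : ℕ) :
    iteratedDeriv n (iteratedDeriv m f) = iteratedDeriv (n + m) f := by
  simp only [iteratedDeriv_eq_iterate]
  rw [Function.iterate_add]
  rfl

lemma contDiff_iteratedDeriv {φ : ℝ → ℝ} (hφ : ContDiff ℝ (⊤ : ℕ∞) φ) (m : ℕ) :
    ContDiff ℝ (⊤ : ℕ∞) (iteratedDeriv m φ) := by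
  induction m generalizing φ with
  | zero => simpa [iteratedDeriv_zero] using hφ
  | succ m IH =>
    rw [iteratedDeriv_succ']
    exact IH (contDiff_infty_iff_deriv.1 hφ).2

/-- The linear form ω ↦ ∑ i, a i * ω i as a continuous linear map. -/
noncomputable def Gmap {ν : ℕ} (a : Fin ν → ℝ) : (Fin ν → ℝ) →L[ℝ] ℝ :=
  ∑ i, a i • ContinuousLinearMap.proj i

lemma Gmap_apply {ν : ℕ} (a : Fin ν → ℝ) (ω : Fin ν → ℝ) :
    Gmap a ω = ∑ i, a i * ω i := by
  simp [Gmap]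

lemma Gmap_single {ν : ℕ} (a : Fin ν → ℝ) (j : Fin ν) :
    Gmap a (Pi.single j 1) = a j := by
  rw [Gmap_apply]
  simp [Pi.single_apply]

lemma pderiv_comp {ν : ℕ} (a : Fin ν → ℝ) (φ : ℝ → ℝ) (hφ : ContDiff ℝ (⊤ : ℕ∞) φ)
    (K : ℝ) (i : Fin ν) :
    pderiv' i (fun ω => K * φ (Gmap a ω)) =
      fun ω => (K * a i) * deriv φ (Gmap a ω) := by
  have h1 : (1 : WithTop ℕ∞) ≤ ((⊤ : ℕ∞) : WithTop ℕ∞) := natle_infty 1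
  have hdφ : Differentiable ℝ φ := hφ.differentiable (by simp)
  funext ω
  have hd : DifferentiableAt ℝ (fun ω => φ (Gmap a ω)) ω :=
    (hdφ.differentiableAt).comp ω (Gmap a).differentiableAt
  have hcomp : fderiv ℝ (fun ω => φ (Gmap a ω)) ω =
      (fderiv ℝ φ (Gmap a ω)).comp (Gmap a) := by
    have := fderiv_comp ω (hdφ.differentiableAt) (Gmap a).differentiableAt
    rwa [(Gmap a).fderiv] at this
  show fderiv ℝ (fun ω => K * φ (Gmap a ω)) ω (Pi.single i 1) = _
  rw [fderiv_const_mul hd K]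
  rw [ContinuousLinearMap.smul_apply, hcomp]
  rw [ContinuousLinearMap.comp_apply, Gmap_single]
  have : fderiv ℝ φ (Gmap a ω) (a i) = a i * deriv φ (Gmap a ω) := by
    have h1' : (a i : ℝ) = a i • (1 : ℝ) := by simp
    rw [h1', map_smul, fderiv_apply_one_eq_deriv, smul_eq_mul]
    simp
  rw [this, smul_eq_mul]
  ring

lemma iter_pderiv {ν : ℕ} (a : Fin ν → ℝ) (i : Fin ν) (n : ℕ) :
    ∀ (φ : ℝ → ℝ), ContDiff ℝ (⊤ : ℕ∞) φ → ∀ K : ℝ,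
    (pderiv' i)^[n] (fun ω => K * φ (Gmap a ω)) =
      fun ω => (K * a i ^ n) * iteratedDeriv n φ (Gmap a ω) := by
  induction n with
  | zero => intro φ hφ K; simp [iteratedDeriv_zero]
  | succ n IH =>
    intro φ hφ K
    rw [Function.iterate_succ_apply, pderiv_comp a φ hφ K i,
      IH (deriv φ) (contDiff_infty_iff_deriv.1 hφ).2 (K * a i)]
    funext ω
    rw [← iteratedDeriv_succ']
    ring

lemma multiDeriv_comp {ν : ℕ} (a : Fin ν → ℝ) (α : Fin ν → ℕ) (φ : ℝ → ℝ)
    (hφ : ContDiff ℝ (⊤ : ℕ∞) φ) (K : ℝ) :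
    multiDeriv α (fun ω => K * φ (Gmap a ω)) =
      fun ω => (K * ∏ i, a i ^ α i) * iteratedDeriv (∑ i, α i) φ (Gmap a ω) := by
  have main : ∀ l : List (Fin ν),
      l.foldr (fun i g => (pderiv' i)^[α i] g) (fun ω => K * φ (Gmap a ω)) =
        fun ω => (K * (l.map (fun i => a i ^ α i)).prod) *
          iteratedDeriv ((l.map α).sum) φ (Gmap a ω) := by
    intro l
    induction l with
    | nil => simp [iteratedDeriv_zero]
    | cons i l IH =>
      simp only [List.foldr_cons, IH, List.map_cons, List.prod_cons, List.sum_cons]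
      rw [show (fun ω => K * (l.map (fun i => a i ^ α i)).prod *
          iteratedDeriv ((l.map α).sum) φ (Gmap a ω)) =
          (fun ω => (K * (l.map (fun i => a i ^ α i)).prod) *
          (iteratedDeriv ((l.map α).sum) φ) (Gmap a ω)) from rfl,
        iter_pderiv a i (α i) _ (contDiff_iteratedDeriv hφ _) _]
      funext ω
      rw [iteratedDeriv_iteratedDeriv]
      ring
  unfold multiDeriv
  rw [main (List.finRange ν)]
  funext ω
  rw [Fin.prod_univ_def, Fin.sum_univ_def]

end SDIE

/-- Extension of the inverse of the small divisor ω·ℓ: g_ℓ is C^∞ on ℝ^ν, coincides with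
1/(ω·ℓ) where |ω·ℓ| ≥ γ⟨ℓ⟩^{−τ}, and satisfies γ^{|α|}|∂^α g_ℓ(ω)| ≤ C γ⁻¹ ⟨ℓ⟩^μ with
μ = k+1+(k+2)τ, for a constant C depending only on k, ν and χ. -/
theorem small_divisor_inverse_extension (ν k : ℕ) (hν : 1 ≤ ν)
    (χ : ℝ → ℝ) (hχ : IsCutoff χ) :
    ∃ C : ℝ, 0 < C ∧ ∀ τ : ℝ, 0 < τ → ∀ γ : ℝ, 0 < γ → γ ≤ 1 →
      ∀ ℓ : Fin ν → ℤ, ℓ ≠ 0 →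
        (∀ m : ℕ, ContDiff ℝ m (gsd χ τ γ ℓ)) ∧
        (∀ ω : Fin ν → ℝ, γ * brakF ℓ ^ (-τ) ≤ |∑ i, ω i * (ℓ i : ℝ)| →
          gsd χ τ γ ℓ ω = 1 / (∑ i, ω i * (ℓ i : ℝ))) ∧
        (∀ ω : Fin ν → ℝ, ∀ α : Fin ν → ℕ, ∑ i, α i ≤ k + 1 →
          γ ^ (∑ i, α i) * |multiDeriv α (gsd χ τ γ ℓ) ω| ≤
            C * γ⁻¹ * brakF ℓ ^ ((k : ℝ) + 1 + ((k : ℝ) + 2) * τ)) := by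
  obtain ⟨B, hB, hBb⟩ := SDIE.psi_bound hχ (k + 1)
  refine ⟨B, hB, ?_⟩
  intro τ hτ γ hγ hγ1 ℓ hℓ
  have hbr1 : (1 : ℝ) ≤ brakF ℓ := by
    unfold brakF
    exact_mod_cast Nat.one_le_cast.2 (le_max_left _ _)
  have hbr0 : (0 : ℝ) < brakF ℓ := lt_of_lt_of_le one_pos hbr1
  have hM1 : (1 : ℝ) ≤ brakF ℓ ^ τ := Real.one_le_rpow hbr1 hτ.le
  have hM0 : (0 : ℝ) < brakF ℓ ^ τ := lt_of_lt_of_le one_pos hM1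
  have hc0 : (0 : ℝ) < brakF ℓ ^ τ * γ⁻¹ := mul_pos hM0 (inv_pos.2 hγ)
  set a : Fin ν → ℝ := fun i => (brakF ℓ ^ τ * γ⁻¹) * (ℓ i : ℝ) with hadef
  have hG : ∀ ω : Fin ν → ℝ,
      SDIE.Gmap a ω = (brakF ℓ ^ τ * γ⁻¹) * ∑ i, ω i * (ℓ i : ℝ) := by
    intro ω
    rw [SDIE.Gmap_apply, Finset.mul_sum]
    refine Finset.sum_congr rfl fun i _ => ?_
    simp only [hadef]
    ring
  have hgsd : gsd χ τ γ ℓ =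
      fun ω => (brakF ℓ ^ τ * γ⁻¹) * SDIE.psi χ (SDIE.Gmap a ω) := by
    funext ω
    rw [hG]
    unfold gsd SDIE.psi
    by_cases h : (∑ i, ω i * (ℓ i : ℝ)) = 0
    · simp [h]
    · rw [if_neg h, if_neg (mul_ne_zero hc0.ne' h)]
      rw [show (brakF ℓ ^ τ * γ⁻¹) * (∑ i, ω i * (ℓ i : ℝ)) =
        (∑ i, ω i * (ℓ i : ℝ)) * brakF ℓ ^ τ * γ⁻¹ by ring]
      field_simp
  refine ⟨?_, ?_, ?_⟩
  · intro m
    rw [hgsd]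
    exact (contDiff_const.mul ((SDIE.psi_smooth hχ).comp
      (SDIE.Gmap a).contDiff)).of_le (SDIE.natle_infty m)
  · intro ω hω
    have hpos : 0 < γ * brakF ℓ ^ (-τ) := mul_pos hγ (Real.rpow_pos_of_pos hbr0 _)
    have ht0 : (∑ i, ω i * (ℓ i : ℝ)) ≠ 0 := by
      intro h
      rw [h, abs_zero] at hω
      linarith
    unfold gsd
    rw [if_neg ht0]
    have harg : 2 / 3 ≤ |(∑ i, ω i * (ℓ i : ℝ)) * brakF ℓ ^ τ * γ⁻¹| := by
      rw [Real.rpow_neg hbr0.le] at hω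
      rw [abs_mul, abs_mul, abs_of_pos hM0, abs_of_pos (inv_pos.2 hγ)]
      have h2 : (1 : ℝ) = (γ * (brakF ℓ ^ τ)⁻¹) * (brakF ℓ ^ τ * γ⁻¹) := by
        field_simp
      have h3 := mul_le_mul_of_nonneg_right hω hc0.le
      rw [mul_assoc]
      linarith
    rw [hχ.2.2.2.2 _ harg]
  · intro ω α hα
    simp only [hgsd,
      SDIE.multiDeriv_comp a α (SDIE.psi χ) (SDIE.psi_smooth hχ) (brakF ℓ ^ τ * γ⁻¹)]
    set N := ∑ i, α i with hN
    have hNk : (N : ℝ) ≤ (k : ℝ) + 1 := by exact_mod_cast hα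
    have hai : ∀ i, |a i| ≤ (brakF ℓ ^ τ * γ⁻¹) * brakF ℓ := by
      intro i
      simp only [hadef]
      rw [abs_mul, abs_of_pos hc0]
      refine mul_le_mul_of_nonneg_left ?_ hc0.le
      have habs : |(ℓ i : ℝ)| = ((ℓ i).natAbs : ℝ) := by
        rw [← Int.cast_abs, Int.abs_eq_natAbs, Int.cast_natCast]
      rw [habs]
      unfold brakF
      exact_mod_cast Nat.cast_le.2
        (le_trans (Finset.le_sup (f := fun i => (ℓ i).natAbs) (Finset.mem_univ i))
          (le_max_right _ _))
    have hprod : |∏ i, a i ^ α i| ≤ ((brakF ℓ ^ τ * γ⁻¹) * brakF ℓ) ^ N := by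
      rw [Finset.abs_prod]
      calc ∏ i, |a i ^ α i| = ∏ i, |a i| ^ α i := by simp [abs_pow]
        _ ≤ ∏ i, ((brakF ℓ ^ τ * γ⁻¹) * brakF ℓ) ^ α i :=
            Finset.prod_le_prod (fun i _ => pow_nonneg (abs_nonneg _) _)
              (fun i _ => pow_le_pow_left₀ (abs_nonneg _) (hai i) _)
        _ = _ := by rw [Finset.prod_pow_eq_pow_sum]
    have hψB : |iteratedDeriv N (SDIE.psi χ) (SDIE.Gmap a ω)| ≤ B := hBb N hα _
    have key : |(brakF ℓ ^ τ * γ⁻¹ * ∏ i, a i ^ α i) *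
        iteratedDeriv N (SDIE.psi χ) (SDIE.Gmap a ω)| ≤
        (brakF ℓ ^ τ * γ⁻¹ * ((brakF ℓ ^ τ * γ⁻¹) * brakF ℓ) ^ N) * B := by
      rw [abs_mul, abs_mul, abs_of_pos hc0]
      exact mul_le_mul (mul_le_mul_of_nonneg_left hprod hc0.le) hψB (abs_nonneg _)
        (by positivity)
    have e1 : γ ^ N * ((brakF ℓ ^ τ * γ⁻¹ * ((brakF ℓ ^ τ * γ⁻¹) * brakF ℓ) ^ N) * B)
        = B * γ⁻¹ * ((brakF ℓ ^ τ) ^ (N + 1) * brakF ℓ ^ N) := by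
      have hγN : γ ^ N * γ⁻¹ ^ N = 1 := by rw [← mul_pow, mul_inv_cancel₀ hγ.ne', one_pow]
      linear_combination (B * γ⁻¹ * (brakF ℓ ^ τ) ^ (N + 1) * brakF ℓ ^ N) * hγN
    have e2 : (brakF ℓ ^ τ) ^ (N + 1) * brakF ℓ ^ N
        = brakF ℓ ^ (τ * ((N : ℝ) + 1) + (N : ℝ)) := by
      rw [← Real.rpow_natCast (brakF ℓ ^ τ) (N + 1), ← Real.rpow_natCast (brakF ℓ) N,
        ← Real.rpow_mul hbr0.le, ← Real.rpow_add hbr0]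
      congr 1
      push_cast
      ring
    have e3 : brakF ℓ ^ (τ * ((N : ℝ) + 1) + (N : ℝ))
        ≤ brakF ℓ ^ ((k : ℝ) + 1 + ((k : ℝ) + 2) * τ) := by
      refine Real.rpow_le_rpow_of_exponent_le hbr1 ?_
      nlinarith [mul_le_mul_of_nonneg_left
        (show (N : ℝ) + 1 ≤ (k : ℝ) + 2 by linarith) hτ.le]
    calc γ ^ N * |(brakF ℓ ^ τ * γ⁻¹ * ∏ i, a i ^ α i) *
          iteratedDeriv N (SDIE.psi χ) (SDIE.Gmap a ω)|
        ≤ γ ^ N * ((brakF ℓ ^ τ * γ⁻¹ * ((brakF ℓ ^ τ * γ⁻¹) * brakF ℓ) ^ N) * B) :=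
          mul_le_mul_of_nonneg_left key (pow_nonneg hγ.le N)
      _ = B * γ⁻¹ * brakF ℓ ^ (τ * ((N : ℝ) + 1) + (N : ℝ)) := by rw [e1, e2]
      _ ≤ B * γ⁻¹ * brakF ℓ ^ ((k : ℝ) + 1 + ((k : ℝ) + 2) * τ) :=
          mul_le_mul_of_nonneg_left e3 (by positivity)
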